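/- Let 𝒢 be a finite connected properly 4-edge-colored 4-regular bipartite multigraph, fix distinct colors ℓ ≠ ℓ', let B_ℓ and B_{ℓ'} be the sets of ℓ-bubbles and ℓ'-bubbles, and for b ∈ B_ℓ let |V_b(ℓ')| be the number of connected components of the subgraph of b colored by the two colors different from ℓ and ℓ'. Then |B_{ℓ'}| + |B_ℓ| - Σ_{b ∈ B_ℓ} |V_b(ℓ')| ≤ 1. -/

import Mathlib

/-- The subgraph of a colored (multi)graph keeping only edges whose color lies in `S`. -/
def colorSubgraph {V E : Type} (src tgt : E → V) (c : E → Fin 4) (S : Set (Fin 4)) :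
    SimpleGraph V :=
  SimpleGraph.fromRel (fun u v => ∃ e : E, c e ∈ S ∧ u = src e ∧ v = tgt e)

lemma colorSubgraph_mono {V E : Type} (src tgt : E → V) (c : E → Fin 4) {S T : Set (Fin 4)}
    (hST : S ⊆ T) : colorSubgraph src tgt c S ≤ colorSubgraph src tgt c T := by
  intro u v h
  rw [colorSubgraph, SimpleGraph.fromRel_adj] at h ⊢
  obtain ⟨hne, h | h⟩ := h
  · exact ⟨hne, Or.inl ⟨h.choose, hST h.choose_spec.1, h.choose_spec.2⟩⟩
  · exact ⟨hne, Or.inr ⟨h.choose, hST h.choose_spec.1, h.choose_spec.2⟩⟩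

lemma conn_card_le {W : Type} [Fintype W] (H : SimpleGraph W) (hH : H.Connected) :
    Nat.card W ≤ Nat.card H.edgeSet + 1 := by
  classical
  rw [Nat.card_eq_fintype_card]
  obtain ⟨r⟩ := hH.nonempty
  have key : ∀ v : W, v ≠ r → ∃ u : W, H.Adj v u ∧ H.dist u r < H.dist v r := by
    intro v hv
    have hd : 0 < H.dist v r := (hH.preconnected v r).pos_dist_of_ne hv
    obtain ⟨p, hp⟩ := (hH.preconnected v r).exists_walk_length_eq_dist
    cases p with
    | nil => simp at hp; exact absurd rfl hv
    | cons h q =>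
      refine ⟨_, h, ?_⟩
      have := SimpleGraph.dist_le q
      simp only [SimpleGraph.Walk.length_cons] at hp
      omega
  choose u hadj hlt using key
  have hinj : Function.Injective
      (fun v : {v : W // v ≠ r} => (⟨s(v.1, u v.1 v.2), hadj v.1 v.2⟩ : H.edgeSet)) := by
    rintro ⟨v₁, h₁⟩ ⟨v₂, h₂⟩ hf
    simp only [Subtype.mk.injEq] at hf
    replace hf := Sym2.eq_iff.mp (congrArg Subtype.val hf)
    rcases hf with ⟨hv, hu⟩ | ⟨hv, hu⟩
    · exact Subtype.ext hv
    · exfalso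
      have l1 := hlt v₁ h₁
      have l2 := hlt v₂ h₂
      rw [hu] at l1
      rw [← hv] at l2
      omega
  have h1 : Nat.card {v : W // v ≠ r} ≤ Nat.card H.edgeSet :=
    Nat.card_le_card_of_injective _ hinj
  have h2 : Nat.card {v : W // v ≠ r} = Fintype.card W - 1 := by
    rw [Nat.card_eq_fintype_card, Fintype.card_subtype_compl, Fintype.card_subtype_eq]
  have h3 : 0 < Fintype.card W := Fintype.card_pos_iff.mpr ⟨r⟩
  omega

/-- For a finite connected properly 4-edge-colored 4-regular bipartite multigraph 𝒢 and
    distinct colors ℓ ≠ ℓ': |B_{ℓ'}| + |B_ℓ| - Σ_{b ∈ B_ℓ} |V_b(ℓ')| ≤ 1, where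
    B_ℓ are the connected components avoiding color ℓ (the ℓ-bubbles) and V_b(ℓ') is
    the set of connected components of the bicolored subgraph avoiding both ℓ and ℓ'
    that lie inside b. -/
theorem stmt5 (V E : Type) [Fintype V] [Fintype E]
    (src tgt : E → V) (c : E → Fin 4) (ε : V → Bool)
    (hbip : ∀ e : E, ε (src e) ≠ ε (tgt e))
    (hreg : ∀ (v : V) (k : Fin 4), ∃! e : E, c e = k ∧ (src e = v ∨ tgt e = v))
    (ℓ ℓ' : Fin 4) (hne : ℓ ≠ ℓ')
    (hconn : (colorSubgraph src tgt c Set.univ).Connected) :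
    (Nat.card (colorSubgraph src tgt c {k | k ≠ ℓ'}).ConnectedComponent : ℤ)
      + Nat.card (colorSubgraph src tgt c {k | k ≠ ℓ}).ConnectedComponent
      - ∑ᶠ b : (colorSubgraph src tgt c {k | k ≠ ℓ}).ConnectedComponent,
          (Nat.card {c2 : (colorSubgraph src tgt c {k | k ≠ ℓ ∧ k ≠ ℓ'}).ConnectedComponent //
            ∃ v : V,
              (colorSubgraph src tgt c {k | k ≠ ℓ ∧ k ≠ ℓ'}).connectedComponentMk v = c2 ∧
              (colorSubgraph src tgt c {k | k ≠ ℓ}).connectedComponentMk v = b} : ℤ)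
      ≤ 1 := by
  classical
  set G0 := colorSubgraph src tgt c Set.univ with hG0
  set Gl := colorSubgraph src tgt c {k | k ≠ ℓ} with hGl
  set Gl' := colorSubgraph src tgt c {k | k ≠ ℓ'} with hGl'
  set G2 := colorSubgraph src tgt c {k | k ≠ ℓ ∧ k ≠ ℓ'} with hG2
  have h2l : G2 ≤ Gl := colorSubgraph_mono src tgt c (fun k hk => hk.1)
  have h2l' : G2 ≤ Gl' := colorSubgraph_mono src tgt c (fun k hk => hk.2)
  let fl : G2.ConnectedComponent → Gl.ConnectedComponent :=
    SimpleGraph.ConnectedComponent.map (SimpleGraph.Hom.ofLE h2l)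
  let fl' : G2.ConnectedComponent → Gl'.ConnectedComponent :=
    SimpleGraph.ConnectedComponent.map (SimpleGraph.Hom.ofLE h2l')
  have hflmk : ∀ v : V, fl (G2.connectedComponentMk v) = Gl.connectedComponentMk v := by
    intro v; simp [fl]
  have hfl'mk : ∀ v : V, fl' (G2.connectedComponentMk v) = Gl'.connectedComponentMk v := by
    intro v; simp [fl']
  haveI : Fintype Gl.ConnectedComponent := Fintype.ofFinite _
  haveI : Fintype Gl'.ConnectedComponent := Fintype.ofFinite _
  haveI : Fintype G2.ConnectedComponent := Fintype.ofFinite _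
  -- Step A: the finsum equals Nat.card G2.ConnectedComponent
  have hsum : ∑ᶠ b : Gl.ConnectedComponent,
      (Nat.card {c2 : G2.ConnectedComponent //
        ∃ v : V, G2.connectedComponentMk v = c2 ∧ Gl.connectedComponentMk v = b} : ℤ)
      = (Nat.card G2.ConnectedComponent : ℤ) := by
    rw [finsum_eq_sum_of_fintype]
    have hfib : ∀ b : Gl.ConnectedComponent,
        Nat.card {c2 : G2.ConnectedComponent //
          ∃ v : V, G2.connectedComponentMk v = c2 ∧ Gl.connectedComponentMk v = b}
        = Nat.card {c2 : G2.ConnectedComponent // fl c2 = b} := by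
      intro b
      apply Nat.card_congr
      apply Equiv.subtypeEquivRight
      intro c2
      constructor
      · rintro ⟨v, rfl, rfl⟩; exact hflmk v
      · intro h
        obtain ⟨v, rfl⟩ := c2.exists_rep
        exact ⟨v, rfl, (hflmk v).symm.trans h⟩
    simp_rw [hfib]
    rw [← Nat.cast_sum]
    congr 1
    simp_rw [Nat.card_eq_fintype_card]
    rw [← Fintype.card_sigma]
    exact Fintype.card_congr (Equiv.sigmaFiberEquiv fl)
  rw [hsum]
  -- Step B: connectivity graph
  set W := Gl'.ConnectedComponent ⊕ Gl.ConnectedComponent with hW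
  set H : SimpleGraph W := SimpleGraph.fromRel (fun x y =>
    ∃ v : V, x = Sum.inl (Gl'.connectedComponentMk v) ∧ y = Sum.inr (Gl.connectedComponentMk v))
    with hH
  have hHadj : ∀ v : V,
      H.Adj (Sum.inl (Gl'.connectedComponentMk v)) (Sum.inr (Gl.connectedComponentMk v)) := by
    intro v
    rw [hH, SimpleGraph.fromRel_adj]
    exact ⟨by simp, Or.inl ⟨v, rfl, rfl⟩⟩
  -- adjacency in G0 transfers
  have hstep : ∀ u v : V, G0.Adj u v →
      H.Reachable (Sum.inl (Gl'.connectedComponentMk u)) (Sum.inl (Gl'.connectedComponentMk v)) := by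
    intro u v huv
    rw [hG0, colorSubgraph, SimpleGraph.fromRel_adj] at huv
    obtain ⟨hne2, he⟩ := huv
    have hcase : ∃ e : E, (u = src e ∧ v = tgt e) ∨ (v = src e ∧ u = tgt e) := by
      rcases he with ⟨e, _, h1, h2⟩ | ⟨e, _, h1, h2⟩
      · exact ⟨e, Or.inl ⟨h1, h2⟩⟩
      · exact ⟨e, Or.inr ⟨h1, h2⟩⟩
    obtain ⟨e, hcase⟩ := hcase
    by_cases hc : c e = ℓ'
    · -- then c e ≠ ℓ, so u, v in same Gl-component, use two H-edges
      have hadjl : Gl.Adj u v := by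
        rw [hGl, colorSubgraph, SimpleGraph.fromRel_adj]
        refine ⟨hne2, ?_⟩
        rcases hcase with ⟨h1, h2⟩ | ⟨h1, h2⟩
        · exact Or.inl ⟨e, by simp [hc, Ne.symm hne], h1, h2⟩
        · exact Or.inr ⟨e, by simp [hc, Ne.symm hne], h1, h2⟩
      have hl : Gl.connectedComponentMk u = Gl.connectedComponentMk v :=
        SimpleGraph.ConnectedComponent.sound hadjl.reachable
      have r1 := (hHadj u).reachable
      have r2 := (hHadj v).reachable.symm
      rw [hl] at r1
      exact r1.trans r2
    · -- c e ≠ ℓ', so same Gl'-component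
      have hadjl' : Gl'.Adj u v := by
        rw [hGl', colorSubgraph, SimpleGraph.fromRel_adj]
        refine ⟨hne2, ?_⟩
        rcases hcase with ⟨h1, h2⟩ | ⟨h1, h2⟩
        · exact Or.inl ⟨e, hc, h1, h2⟩
        · exact Or.inr ⟨e, hc, h1, h2⟩
      rw [SimpleGraph.ConnectedComponent.sound hadjl'.reachable]
  have hwalk : ∀ u v : V, G0.Reachable u v →
      H.Reachable (Sum.inl (Gl'.connectedComponentMk u)) (Sum.inl (Gl'.connectedComponentMk v)) := by
    intro u v huv
    obtain ⟨p⟩ := huv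
    induction p with
    | nil => rfl
    | cons h q ih => exact (hstep _ _ h).trans ih
  have hHconn : H.Connected := by
    have hV : Nonempty V := hconn.nonempty
    rw [SimpleGraph.connected_iff]
    constructor
    · intro x y
      have hred : ∀ x : W, ∃ v : V, H.Reachable x (Sum.inl (Gl'.connectedComponentMk v)) := by
        intro x
        rcases x with a | b
        · obtain ⟨v, rfl⟩ := a.exists_rep
          exact ⟨v, SimpleGraph.Reachable.refl _⟩
        · obtain ⟨v, rfl⟩ := b.exists_rep
          exact ⟨v, (hHadj v).reachable.symm⟩
      obtain ⟨vx, hx⟩ := hred x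
      obtain ⟨vy, hy⟩ := hred y
      exact (hx.trans (hwalk vx vy (hconn.preconnected vx vy))).trans hy.symm
    · exact ⟨Sum.inr (Gl.connectedComponentMk (Classical.arbitrary V))⟩
  -- injection from H.edgeSet into G2.ConnectedComponent
  have hedge : ∀ e : H.edgeSet, ∃ v : V,
      (e : Sym2 W) = s(Sum.inl (Gl'.connectedComponentMk v), Sum.inr (Gl.connectedComponentMk v)) := by
    rintro ⟨e, he⟩
    induction e with
    | _ x y =>
      rw [SimpleGraph.mem_edgeSet, hH, SimpleGraph.fromRel_adj] at he
      obtain ⟨hxy, ⟨v, h1, h2⟩ | ⟨v, h1, h2⟩⟩ := he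
      · exact ⟨v, by subst h1; subst h2; rfl⟩
      · exact ⟨v, by subst h1; subst h2; exact Sym2.eq_swap⟩
  choose w hw using hedge
  have hginj : Function.Injective (fun e : H.edgeSet => G2.connectedComponentMk (w e)) := by
    intro e1 e2 h12
    simp only at h12
    have hl : Gl.connectedComponentMk (w e1) = Gl.connectedComponentMk (w e2) := by
      rw [← hflmk, ← hflmk, h12]
    have hl' : Gl'.connectedComponentMk (w e1) = Gl'.connectedComponentMk (w e2) := by
      rw [← hfl'mk, ← hfl'mk, h12]
    apply Subtype.ext
    rw [show (e1 : Sym2 W) = _ from hw e1, show (e2 : Sym2 W) = _ from hw e2, hl, hl']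
  have hEcard : Nat.card H.edgeSet ≤ Nat.card G2.ConnectedComponent :=
    Nat.card_le_card_of_injective _ hginj
  haveI : Fintype W := Fintype.ofFinite _
  have hmain := conn_card_le H hHconn
  have hWcard : Nat.card W
      = Nat.card Gl'.ConnectedComponent + Nat.card Gl.ConnectedComponent := Nat.card_sum
  rw [hWcard] at hmain
  have : Nat.card Gl'.ConnectedComponent + Nat.card Gl.ConnectedComponent
      ≤ Nat.card G2.ConnectedComponent + 1 := le_trans hmain (by omega)
  push_cast
  omega
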